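/- Let (X, t, r, d, ∂̃) be a dihedral module with ∞-simplicial faces, and define d_0^k = Σ_{0 ≤ i_1 < ... < i_k ≤ n} (-1)^{i_1+...+i_k} ∂_(i_1,...,i_k) : X_{n,•} → X_{n-k,•+k-1} and R_n = (-1)^{n(n+1)/2} r_n. Then d_0^k ∘ R_n = R_{n-k} ∘ d_0^k for all k ≥ 1 and n ≥ 0. -/

import Mathlib

open scoped Classical

private lemma neg_one_pow_parity {K : Type*} [Monoid K] [HasDistribNeg K] {a b : ℕ}
    (h : a % 2 = b % 2) : (-1 : K) ^ a = (-1 : K) ^ b := by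
  rw [← Nat.div_add_mod a 2, ← Nat.div_add_mod b 2, h, pow_add, pow_add,
    pow_mul, pow_mul, neg_one_sq]
  simp

private lemma sum_comp' {K : Type*} [CommRing K] {M N P : Type*} [AddCommGroup M]
    [AddCommGroup N] [AddCommGroup P] [Module K M] [Module K N] [Module K P]
    {ι : Type*} (s : Finset ι) (f : ι → N →ₗ[K] P) (g : M →ₗ[K] N) :
    (∑ i ∈ s, f i).comp g = ∑ i ∈ s, (f i).comp g := by
  ext x; simp [LinearMap.sum_apply]

private lemma comp_sum' {K : Type*} [CommRing K] {M N P : Type*} [AddCommGroup M]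
    [AddCommGroup N] [AddCommGroup P] [Module K M] [Module K N] [Module K P]
    {ι : Type*} (s : Finset ι) (f : ι → M →ₗ[K] N) (g : N →ₗ[K] P) :
    g.comp (∑ i ∈ s, f i) = ∑ i ∈ s, g.comp (f i) := by
  ext x; simp [LinearMap.sum_apply]

private lemma tri_add (a b : ℕ) :
    (a + b) * (a + b + 1) / 2 = a * (a + 1) / 2 + b * (b + 1) / 2 + a * b := by
  obtain ⟨x, hx⟩ := Nat.even_mul_succ_self a
  obtain ⟨y, hy⟩ := Nat.even_mul_succ_self b
  have h : (a + b) * (a + b + 1) = a * (a + 1) + b * (b + 1) + 2 * (a * b) := by ring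
  omega

private lemma tri_succ (k : ℕ) : k * (k + 1) / 2 = k * (k - 1) / 2 + k := by
  rcases k with _ | m
  · simp
  · have h := tri_add m 1
    have h2 : (m + 1) * (m + 1 - 1) / 2 = m * (m + 1) / 2 := by rw [Nat.add_sub_cancel, mul_comm]
    omega


/-- In a dihedral module with ∞-simplicial faces, with
`d₀^k = ∑_{0≤i₁<⋯<i_k≤n} (-1)^{i₁+⋯+i_k} ∂_(i₁,…,i_k) : X_{n,•} → X_{n-k,•+k-1}` and
`R_n = (-1)^{n(n+1)/2} r_n`, one has `d₀^k ∘ R_n = R_{n-k} ∘ d₀^k` (`k ≥ 1`).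
Here `F n k c` stands for the ∞-simplicial face `∂_(c 0, …, c (k-1))` (for strictly
increasing `c`), the internal grading being collapsed. -/
theorem stmt8 {K : Type*} [CommRing K] {X : ℕ → Type*}
    [∀ n, AddCommGroup (X n)] [∀ n, Module K (X n)]
    (r : ∀ n, Module.End K (X n)) (hr2 : ∀ n, r n ^ 2 = 1)
    (F : ∀ n k : ℕ, (Fin k → Fin (n + 1)) → (X n →ₗ[K] X (n - k)))
    (n k : ℕ) (hk : 1 ≤ k) (hkn : k ≤ n)
    -- relation (1.3) : `∂_(i₁,…,i_k) r_n = (-1)^{k(k-1)/2} r_{n-k} ∂_(n-i_k,…,n-i₁)`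
    (hrel : ∀ c : Fin k → Fin (n + 1), StrictMono c →
      (F n k c).comp (r n : X n →ₗ[K] X n) =
        ((-1 : K) ^ (k * (k - 1) / 2)) •
          ((r (n - k) : X (n - k) →ₗ[K] X (n - k)).comp
            (F n k (fun s => ⟨n - (c s.rev : ℕ), by omega⟩)))) :
    (∑ c ∈ Finset.univ.filter (fun c : Fin k → Fin (n + 1) => StrictMono c),
        ((-1 : K) ^ (∑ s : Fin k, (c s : ℕ))) • F n k c).comp
      ((((-1 : K) ^ (n * (n + 1) / 2)) • r n : Module.End K (X n)) : X n →ₗ[K] X n) =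
    ((((-1 : K) ^ ((n - k) * ((n - k) + 1) / 2)) • r (n - k) :
        Module.End K (X (n - k))) : X (n - k) →ₗ[K] X (n - k)).comp
      (∑ c ∈ Finset.univ.filter (fun c : Fin k → Fin (n + 1) => StrictMono c),
        ((-1 : K) ^ (∑ s : Fin k, (c s : ℕ))) • F n k c) := by
  classical
  rw [sum_comp', comp_sum']
  refine Finset.sum_nbij' (fun c => fun s => (⟨n - (c s.rev : ℕ), by omega⟩ : Fin (n + 1)))
      (fun c => fun s => (⟨n - (c s.rev : ℕ), by omega⟩ : Fin (n + 1))) ?_ ?_ ?_ ?_ ?_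
  · intro c hc
    simp only [Finset.mem_filter, Finset.mem_univ, true_and] at hc ⊢
    intro s t hst
    have h1 : t.rev < s.rev := by rwa [Fin.rev_lt_rev]
    have h2 : (c t.rev : ℕ) < (c s.rev : ℕ) := hc h1
    have h3 : (c s.rev : ℕ) ≤ n := by omega
    exact Fin.mk_lt_mk.mpr (by omega)
  · intro c hc
    simp only [Finset.mem_filter, Finset.mem_univ, true_and] at hc ⊢
    intro s t hst
    have h1 : t.rev < s.rev := by rwa [Fin.rev_lt_rev]
    have h2 : (c t.rev : ℕ) < (c s.rev : ℕ) := hc h1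
    have h3 : (c s.rev : ℕ) ≤ n := by omega
    exact Fin.mk_lt_mk.mpr (by omega)
  · intro c _
    funext s
    apply Fin.ext
    show (n : ℕ) - (n - (c _ : ℕ)) = _
    simp only [Fin.rev_rev]
    have : (c s : ℕ) ≤ n := by omega
    omega
  · intro c _
    funext s
    apply Fin.ext
    show (n : ℕ) - (n - (c _ : ℕ)) = _
    simp only [Fin.rev_rev]
    have : (c s : ℕ) ≤ n := by omega
    omega
  · intro c hc
    simp only [Finset.mem_filter, Finset.mem_univ, true_and] at hc
    rw [LinearMap.smul_comp, LinearMap.comp_smul, hrel c hc, LinearMap.smul_comp,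
      LinearMap.comp_smul, smul_smul, smul_smul, smul_smul, ← pow_add, ← pow_add, ← pow_add]
    congr 1
    -- sign computation
    apply neg_one_pow_parity
    have hsum : (∑ s : Fin k, ((n : ℕ) - (c s.rev : ℕ))) + (∑ s : Fin k, (c s : ℕ)) = k * n := by
      have hrev : (∑ s : Fin k, ((n : ℕ) - (c s.rev : ℕ))) = ∑ s : Fin k, ((n : ℕ) - (c s : ℕ)) :=
        Fintype.sum_equiv Fin.revPerm _ _ (fun s => rfl)
      rw [hrev, ← Finset.sum_add_distrib]
      have : ∀ s : Fin k, ((n : ℕ) - (c s : ℕ)) + (c s : ℕ) = n := fun s => by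
        have : (c s : ℕ) ≤ n := by omega
        omega
      simp only [this, Finset.sum_const, Finset.card_univ, Fintype.card_fin, smul_eq_mul]
    have hS' : (∑ s : Fin k, (((fun s => (⟨n - (c s.rev : ℕ), by omega⟩ : Fin (n+1))) s : Fin (n+1)) : ℕ))
        = ∑ s : Fin k, ((n : ℕ) - (c s.rev : ℕ)) := rfl
    rw [hS']
    have h1 := tri_add (n - k) k
    rw [Nat.sub_add_cancel hkn] at h1
    have h2 := tri_succ k
    have h3 : k * n = (n - k) * k + k * k := by
      rw [← add_mul, Nat.sub_add_cancel hkn, mul_comm]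
    have h4 : k * k % 2 = k % 2 := by
      rw [Nat.mul_mod]
      rcases Nat.mod_two_eq_zero_or_one k with h | h <;> simp [h]
    omega
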